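/- Let κ₀, θ∞ ∈ ℂ and set Θ₀ = κ₀/2, Θ∞ = 1 + θ∞ − κ₀/2. For all f, g, t ∈ ℂ with f ≠ 0, setting q = f and p = g − f/4 − t/2 − κ₀/(2f), the identity H_IP(q, p; t) = H_Ok(f, g; t) + f/2 + 2t(Θ₀ + Θ∞) holds, where H_IP(q,p;t) = 2p²q − q³/8 − tq²/2 + (2Θ∞ − 1 − t²)q/2 + 2Θ∞·t − 2Θ₀²/q and H_Ok(f,g;t) = 2fg² − (f² + 2tf + 2κ₀)g + θ∞·f. -/

import Mathlib

open Complex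

private lemma aux_PIV (κ₀ θoo g t q : ℂ) (hf : q ≠ 0) :
    2 * (g - q / 4 - t / 2 - κ₀ / (2 * q)) ^ 2 * q - q ^ 3 / 8 - t * q ^ 2 / 2 +
          (2 * (1 + θoo - κ₀ / 2) - 1 - t ^ 2) * q / 2 +
        2 * (1 + θoo - κ₀ / 2) * t -
      2 * (κ₀ / 2) ^ 2 / q =
    2 * q * g ^ 2 - (q ^ 2 + 2 * t * q + 2 * κ₀) * g + θoo * q + q / 2
      + 2 * t * (κ₀ / 2 + (1 + θoo - κ₀ / 2)) := by
  have h1 : (g - q / 4 - t / 2 - κ₀ / (2 * q)) ^ 2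
      = (4 * q * g - q ^ 2 - 2 * t * q - 2 * κ₀) ^ 2 / (16 * q ^ 2) := by
    rw [eq_div_iff (by simp [hf] : (16 * q ^ 2 : ℂ) ≠ 0)]
    field_simp
    ring
  have h2 : 2 * (κ₀ / 2) ^ 2 / q = κ₀ ^ 2 / (2 * q) := by
    field_simp
  rw [h1, h2]
  have hq1 : q * q⁻¹ = 1 := mul_inv_cancel₀ hf
  linear_combination (κ₀ ^ 2 / 2 * q⁻¹
      - (-q ^ 3 / 8 - t * q ^ 2 / 2 + (2 * (1 + θoo - κ₀ / 2) - 1 - t ^ 2) * q / 2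
          + 2 * (1 + θoo - κ₀ / 2) * t
          - (2 * q * g ^ 2 - (q ^ 2 + 2 * t * q + 2 * κ₀) * g + θoo * q + q / 2
              + 2 * t * (κ₀ / 2 + (1 + θoo - κ₀ / 2)))) * (q * q⁻¹ + 1)) * hq1

/-- under the substitution `q = f`, `p = g − f/4 − t/2 − κ₀/(2f)` and with
`Θ₀ = κ₀/2`, `Θ∞ = 1 + θ∞ − κ₀/2`, the Its–Prokhorov Hamiltonian for P_IV equals the
Okamoto Hamiltonian plus `f/2 + 2t(Θ₀ + Θ∞)`. -/
theorem its_prokhorov_equals_okamoto_hamiltonian_PIV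
    (κ₀ θoo Θ₀ Θoo : ℂ)
    (hΘ₀ : Θ₀ = κ₀ / 2) (hΘoo : Θoo = 1 + θoo - κ₀ / 2)
    (f g t q p : ℂ) (hf : f ≠ 0)
    (hq : q = f) (hp : p = g - f / 4 - t / 2 - κ₀ / (2 * f)) :
    2 * p ^ 2 * q - q ^ 3 / 8 - t * q ^ 2 / 2 + (2 * Θoo - 1 - t ^ 2) * q / 2
        + 2 * Θoo * t - 2 * Θ₀ ^ 2 / q
      = (2 * f * g ^ 2 - (f ^ 2 + 2 * t * f + 2 * κ₀) * g + θoo * f)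
          + f / 2 + 2 * t * (Θ₀ + Θoo) := by
  subst hΘ₀ hΘoo hq hp
  exact aux_PIV κ₀ θoo g t q hf
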